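/- Let d₀* be a minimizer of J(·,0) over X. Then l(0,0) − l(d₀*,0) ≥ ½⟨d₀*, H₀ d₀*⟩ ≥ 0; in particular the model reduction l(0,0) − l(d₀*,0) is nonnegative, and it equals zero if and only if d₀* = 0. -/

import Mathlib

open scoped RealInnerProductSpace
open Finset

noncomputable section

/-- `ℝⁿ` with the Euclidean norm. -/
abbrev Evec (n : ℕ) : Type := EuclideanSpace ℝ (Fin n)

variable {n m : ℕ}

/-- Apply a matrix to a Euclidean vector. -/
def matApply (M : Matrix (Fin n) (Fin n) ℝ) (x : Evec n) : Evec n := Matrix.toEuclideanLin M x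

/-- ℓ2 operator norm of a matrix. -/
def opNorm (M : Matrix (Fin n) (Fin n) ℝ) : ℝ :=
  ‖(LinearMap.toContinuousLinearMap (Matrix.toEuclideanLin M))‖

/-- `H_ρ := ρ H_f + H_0`. -/
def Hmat (Hf H0 : Matrix (Fin n) (Fin n) ℝ) (ρ : ℝ) : Matrix (Fin n) (Fin n) ℝ := ρ • Hf + H0

/-- `l(d,0) = Σ_{i≤m̄} |⟨aⁱ,d⟩+bᵢ| + Σ_{i>m̄} max(⟨aⁱ,d⟩+bᵢ,0)` (indices `i.val < mbar` are
the equality constraints). Note `lpen mbar a b 0 = J⁰`. -/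
def lpen (mbar : ℕ) (a : Fin m → Evec n) (b : Fin m → ℝ) (d : Evec n) : ℝ :=
  ∑ i : Fin m, if (i : ℕ) < mbar then |⟪a i, d⟫ + b i| else max (⟪a i, d⟫ + b i) 0

/-- `J(d,ρ) = ρ⟨g,d⟩ + ½⟨d,H_ρ d⟩ + l(d,0)`. -/
def Jval (mbar : ℕ) (g : Evec n) (a : Fin m → Evec n) (b : Fin m → ℝ)
    (Hf H0 : Matrix (Fin n) (Fin n) ℝ) (ρ : ℝ) (d : Evec n) : ℝ :=
  ρ * ⟪g, d⟫ + (1/2) * ⟪d, matApply (Hmat Hf H0 ρ) d⟫ + lpen mbar a b d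

/-- `āⁱ := aⁱ/‖aⁱ‖`. -/
def abar (a : Fin m → Evec n) (i : Fin m) : Evec n := ‖a i‖⁻¹ • a i

/-- `b̄ᵢ := bᵢ/‖aⁱ‖`. -/
def bbar (a : Fin m → Evec n) (b : Fin m → ℝ) (i : Fin m) : ℝ := b i / ‖a i‖

/-- `Cᵢ`: hyperplane for equality constraints, half-space for inequality constraints. -/
def Cset (mbar : ℕ) (a : Fin m → Evec n) (b : Fin m → ℝ) (i : Fin m) : Set (Evec n) :=
  if (i : ℕ) < mbar then {d | ⟪abar a i, d⟫ + bbar a b i = 0}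
  else {d | ⟪abar a i, d⟫ + bbar a b i ≤ 0}

/-- Real-valued support function `δ*(y|C) = sup_{z∈C} ⟨y,z⟫` (via `sSup`). -/
def suppFn (y : Evec n) (C : Set (Evec n)) : ℝ := sSup ((fun z => ⟪y, z⟫) '' C)

/-- Dual feasibility: `u⁰ + Σᵢ ‖aⁱ‖ uⁱ + u^{m+1} = 0` and `‖uⁱ‖ ≤ 1` for `i = 1,…,m`. -/
def DualFeasible (a : Fin m → Evec n) (u0 : Evec n) (u : Fin m → Evec n) (um1 : Evec n) : Prop :=
  (u0 + ∑ i, ‖a i‖ • u i + um1 = 0) ∧ ∀ i, ‖u i‖ ≤ 1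

/-- Real-valued dual objective
`D(u,ρ) = -½⟨u⁰-ρg, H_ρ⁻¹(u⁰-ρg)⟩ - Σᵢ ‖aⁱ‖ δ*(uⁱ|Cᵢ) - δ*(u^{m+1}|X)`. -/
def Dval (mbar : ℕ) (g : Evec n) (a : Fin m → Evec n) (b : Fin m → ℝ)
    (Hf H0 : Matrix (Fin n) (Fin n) ℝ) (X : Set (Evec n)) (ρ : ℝ)
    (u0 : Evec n) (u : Fin m → Evec n) (um1 : Evec n) : ℝ :=
  -(1/2) * ⟪u0 - ρ • g, matApply (Hmat Hf H0 ρ)⁻¹ (u0 - ρ • g)⟫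
    - ∑ i, ‖a i‖ * suppFn (u i) (Cset mbar a b i)
    - suppFn um1 X

/-- Extended-real-valued support function. -/
def suppFnE (y : Evec n) (C : Set (Evec n)) : EReal :=
  ⨆ z ∈ C, ((⟪y, z⟫ : ℝ) : EReal)

/-- Extended-real-valued dual objective (value in `ℝ ∪ {±∞}`; it is `-∞` when a support
function is `+∞`). -/
def DvalE (mbar : ℕ) (g : Evec n) (a : Fin m → Evec n) (b : Fin m → ℝ)
    (Hf H0 : Matrix (Fin n) (Fin n) ℝ) (X : Set (Evec n)) (ρ : ℝ)
    (u0 : Evec n) (u : Fin m → Evec n) (um1 : Evec n) : EReal :=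
  ((-(1/2) * ⟪u0 - ρ • g, matApply (Hmat Hf H0 ρ)⁻¹ (u0 - ρ • g)⟫ : ℝ) : EReal)
    - ∑ i, (‖a i‖ : EReal) * suppFnE (u i) (Cset mbar a b i)
    - suppFnE um1 X


lemma inner_matApply' {n : ℕ} (M : Matrix (Fin n) (Fin n) ℝ) (x : Evec n) :
    ⟪x, matApply M x⟫ =
      dotProduct (WithLp.equiv 2 (Fin n → ℝ) x) (M.mulVec (WithLp.equiv 2 (Fin n → ℝ) x)) := by
  simp [matApply, Matrix.toEuclideanLin_apply, PiLp.inner_apply, dotProduct, mul_comm]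

lemma pos_of_posdef' {n : ℕ} {M : Matrix (Fin n) (Fin n) ℝ} (hM : M.PosDef) {x : Evec n}
    (hx : x ≠ 0) : (0:ℝ) < ⟪x, matApply M x⟫ := by
  rw [inner_matApply']
  have := hM.dotProduct_mulVec_pos (x := WithLp.equiv 2 (Fin n → ℝ) x) (by simpa using hx)
  simpa using this

/-- Let `d₀*` be a minimizer of `J(·,0) = ½⟨·,H₀·⟩ + l(·,0)` over `X`, where
`H₀` is symmetric positive definite.  Then `l(0,0) − l(d₀*,0) ≥ ½⟨d₀*, H₀ d₀*⟩ ≥ 0`;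
in particular the model reduction `l(0,0) − l(d₀*,0)` is nonnegative, and it equals zero
if and only if `d₀* = 0`. -/
theorem statement_11
    (n m mbar : ℕ) (hn : 1 ≤ n) (hmm : mbar ≤ m)
    (a : Fin m → Evec n) (ha : ∀ i, a i ≠ 0) (b : Fin m → ℝ)
    (H0 : Matrix (Fin n) (Fin n) ℝ) (hH0 : H0.PosDef)
    (X : Set (Evec n)) (hXne : X.Nonempty) (hXcp : IsCompact X)
    (hXcv : Convex ℝ X) (hX0 : (0 : Evec n) ∈ X)
    (dstar : Evec n) (hdX : dstar ∈ X)
    (hmin : ∀ d ∈ X,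
      (1/2) * ⟪dstar, matApply H0 dstar⟫ + lpen mbar a b dstar
        ≤ (1/2) * ⟪d, matApply H0 d⟫ + lpen mbar a b d) :
    ((1/2) * ⟪dstar, matApply H0 dstar⟫ ≤ lpen mbar a b 0 - lpen mbar a b dstar) ∧
    (0 ≤ (1/2) * ⟪dstar, matApply H0 dstar⟫) ∧
    (lpen mbar a b 0 - lpen mbar a b dstar = 0 ↔ dstar = 0) := by
  have h0 := hmin 0 hX0
  have hz : ⟪(0 : Evec n), matApply H0 0⟫ = 0 := by simp [matApply]
  rw [hz] at h0
  have hq : (0:ℝ) ≤ (1/2) * ⟪dstar, matApply H0 dstar⟫ := by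
    rcases eq_or_ne dstar 0 with h | h
    · simp [h, hz]
    · have := pos_of_posdef' hH0 h
      linarith
  refine ⟨by linarith, hq, ?_, ?_⟩
  · intro h
    by_contra hne
    have := pos_of_posdef' hH0 hne
    linarith
  · rintro rfl
    simp
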